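/- For all u, v ∈ H = ℓ²(ℂ), the sabra shell model bilinear operator satisfies ‖B(u,v)‖_{V'} ≤ C₁ |u| |v|, where V' = D(A^{-1/2}) is the dual of V. -/

import Mathlib

open scoped BigOperators

/-- Wave numbers `kₙ = k₀ λⁿ`. -/
noncomputable def kk (k0 lam : ℝ) (n : ℤ) : ℝ := k0 * lam ^ n

/-- The sabra shell model bilinear operator `B(u,v)ₙ`. -/
noncomputable def sabraB (a b k0 lam : ℝ) (u v : ℤ → ℂ) (n : ℤ) : ℂ :=
  if 1 ≤ n then
    -Complex.I *
      ((a : ℂ) * (kk k0 lam (n + 1) : ℂ) * v (n + 2) * (starRingEnd ℂ) (u (n + 1))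
        + (b : ℂ) * (kk k0 lam n : ℂ) * v (n + 1) * (starRingEnd ℂ) (u (n - 1))
        + (a : ℂ) * (kk k0 lam (n - 1) : ℂ) * u (n - 1) * v (n - 2)
        + (b : ℂ) * (kk k0 lam (n - 1) : ℂ) * v (n - 1) * u (n - 2))
  else 0



-- Cauchy-Schwarz for tsums
lemma cs_tsum {f g : ℤ → ℝ} (hf0 : ∀ n, 0 ≤ f n) (hg0 : ∀ n, 0 ≤ g n)
    (hf : Summable fun n => f n ^ 2) (hg : Summable fun n => g n ^ 2) :
    Summable (fun n => f n * g n) ∧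
    ∑' n, f n * g n ≤ Real.sqrt (∑' n, f n ^ 2) * Real.sqrt (∑' n, g n ^ 2) := by
  have hsum : Summable (fun n => f n * g n) := by
    refine Summable.of_nonneg_of_le (fun n => mul_nonneg (hf0 n) (hg0 n))
      (fun n => ?_) (hf.add hg)
    nlinarith [sq_nonneg (f n - g n)]
  refine ⟨hsum, Summable.tsum_le_of_sum_le hsum fun s => ?_⟩
  refine (Real.sum_mul_le_sqrt_mul_sqrt s f g).trans ?_
  gcongr <;> exact Summable.sum_le_tsum s (fun n _ => sq_nonneg _) ‹_›

-- Minkowski-type combination for tsums of squares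
lemma mink_tsum {f g : ℤ → ℝ} (hf0 : ∀ n, 0 ≤ f n) (hg0 : ∀ n, 0 ≤ g n)
    (hf : Summable fun n => f n ^ 2) (hg : Summable fun n => g n ^ 2)
    {A B : ℝ} (hA : Real.sqrt (∑' n, f n ^ 2) ≤ A) (hB : Real.sqrt (∑' n, g n ^ 2) ≤ B) :
    Summable (fun n => (f n + g n) ^ 2) ∧
    Real.sqrt (∑' n, (f n + g n) ^ 2) ≤ A + B := by
  obtain ⟨hfg, hcs⟩ := cs_tsum hf0 hg0 hf hg
  have hsum : Summable (fun n => (f n + g n) ^ 2) := by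
    have : (fun n => (f n + g n) ^ 2) = fun n => f n ^ 2 + 2 * (f n * g n) + g n ^ 2 := by
      funext n; ring
    rw [this]
    exact (hf.add (hfg.mul_left 2)).add hg
  set F := Real.sqrt (∑' n, f n ^ 2) with hF
  set G := Real.sqrt (∑' n, g n ^ 2) with hG
  have hF0 : 0 ≤ F := Real.sqrt_nonneg _
  have hG0 : 0 ≤ G := Real.sqrt_nonneg _
  have hFsq : ∑' n, f n ^ 2 = F ^ 2 := (Real.sq_sqrt (tsum_nonneg fun n => sq_nonneg _)).symm
  have hGsq : ∑' n, g n ^ 2 = G ^ 2 := (Real.sq_sqrt (tsum_nonneg fun n => sq_nonneg _)).symm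
  have key : ∑' n, (f n + g n) ^ 2 ≤ (F + G) ^ 2 := by
    have : ∑' n, (f n + g n) ^ 2 = ∑' n, f n ^ 2 + 2 * (∑' n, f n * g n) + ∑' n, g n ^ 2 := by
      rw [← tsum_mul_left, ← Summable.tsum_add hf (hfg.mul_left 2), ← Summable.tsum_add (hf.add (hfg.mul_left 2)) hg]
      congr 1; funext n; ring
    rw [this, hFsq, hGsq]; nlinarith
  refine ⟨hsum, ?_⟩
  calc Real.sqrt (∑' n, (f n + g n) ^ 2) ≤ Real.sqrt ((F + G) ^ 2) := Real.sqrt_le_sqrt key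
    _ = F + G := Real.sqrt_sq (by positivity)
    _ ≤ A + B := add_le_add hA hB

-- shift invariance
lemma shift_sum (w : ℤ → ℂ) (t : ℤ) (hw : Summable fun n : ℤ => ‖w n‖ ^ 2) :
    Summable (fun n : ℤ => ‖w (n + t)‖ ^ 2) ∧ ∑' n : ℤ, ‖w (n + t)‖ ^ 2 = ∑' n : ℤ, ‖w n‖ ^ 2 := by
  have h1 : Summable ((fun n : ℤ => ‖w n‖ ^ 2) ∘ (Equiv.addRight t)) :=
    (Equiv.summable_iff (Equiv.addRight t)).2 hw
  exact ⟨h1, by simpa using Equiv.tsum_eq (Equiv.addRight t) (fun n : ℤ => ‖w n‖ ^ 2)⟩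

-- product bound
lemma prod_bound (c : ℝ) (hc : 0 ≤ c) (u v : ℤ → ℂ) (s t : ℤ)
    (hu : Summable fun n : ℤ => ‖u n‖ ^ 2) (hv : Summable fun n : ℤ => ‖v n‖ ^ 2) :
    Summable (fun n : ℤ => (c * (‖u (n + s)‖ * ‖v (n + t)‖)) ^ 2) ∧
    Real.sqrt (∑' n : ℤ, (c * (‖u (n + s)‖ * ‖v (n + t)‖)) ^ 2) ≤
      c * (Real.sqrt (∑' n : ℤ, ‖u n‖ ^ 2) * Real.sqrt (∑' n : ℤ, ‖v n‖ ^ 2)) := by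
  obtain ⟨hvs, hvt⟩ := shift_sum v t hv
  set U2 := ∑' n : ℤ, ‖u n‖ ^ 2 with hU2
  have hU2nn : 0 ≤ U2 := tsum_nonneg fun n => sq_nonneg _
  have hbd : ∀ n : ℤ, (c * (‖u (n + s)‖ * ‖v (n + t)‖)) ^ 2 ≤ c ^ 2 * U2 * ‖v (n + t)‖ ^ 2 := by
    intro n
    have h1 : ‖u (n + s)‖ ^ 2 ≤ U2 := Summable.le_tsum hu (n + s) (fun m _ => sq_nonneg _)
    nlinarith [mul_le_mul_of_nonneg_left h1 (show (0:ℝ) ≤ c ^ 2 * ‖v (n + t)‖ ^ 2 by positivity)]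
  have hsum : Summable (fun n : ℤ => (c * (‖u (n + s)‖ * ‖v (n + t)‖)) ^ 2) :=
    Summable.of_nonneg_of_le (fun n => sq_nonneg _) hbd (hvs.mul_left _)
  refine ⟨hsum, ?_⟩
  have h2 : ∑' n : ℤ, (c * (‖u (n + s)‖ * ‖v (n + t)‖)) ^ 2 ≤ c ^ 2 * U2 * ∑' n : ℤ, ‖v (n + t)‖ ^ 2 := by
    rw [← tsum_mul_left]; exact Summable.tsum_le_tsum hbd hsum (hvs.mul_left _)
  rw [hvt] at h2
  calc Real.sqrt (∑' n : ℤ, (c * (‖u (n + s)‖ * ‖v (n + t)‖)) ^ 2)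
      ≤ Real.sqrt (c ^ 2 * U2 * ∑' n : ℤ, ‖v n‖ ^ 2) := Real.sqrt_le_sqrt h2
    _ = c * (Real.sqrt U2 * Real.sqrt (∑' n : ℤ, ‖v n‖ ^ 2)) := by
        rw [Real.sqrt_mul (by positivity), Real.sqrt_mul (sq_nonneg c), Real.sqrt_sq hc, mul_assoc]

/-- for `u, v ∈ H`, `‖B(u,v)‖_{V'} ≤ C₁ |u| |v|` with
`C₁ = |a|(λ⁻¹+λ) + |b|(λ⁻¹+1)`, where `‖f‖²_{V'} = Σ kₙ⁻² |fₙ|²`. -/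
theorem sabraB_H_H_dual_bound (a b k0 lam : ℝ) (hk0 : 0 < k0) (hlam : 1 < lam)
    (u v : ℤ → ℂ) (hu0 : ∀ n : ℤ, n ≤ 0 → u n = 0) (hv0 : ∀ n : ℤ, n ≤ 0 → v n = 0)
    (hu : Summable fun n : ℤ => ‖u n‖ ^ 2)
    (hv : Summable fun n : ℤ => ‖v n‖ ^ 2) :
    Summable (fun n : ℤ => ((kk k0 lam n) ^ 2)⁻¹ * ‖sabraB a b k0 lam u v n‖ ^ 2) ∧
      Real.sqrt (∑' n : ℤ, ((kk k0 lam n) ^ 2)⁻¹ * ‖sabraB a b k0 lam u v n‖ ^ 2) ≤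
        (|a| * (lam⁻¹ + lam) + |b| * (lam⁻¹ + 1)) *
          Real.sqrt (∑' n : ℤ, ‖u n‖ ^ 2) *
          Real.sqrt (∑' n : ℤ, ‖v n‖ ^ 2) := by
  have hlam0 : (0:ℝ) < lam := lt_trans one_pos hlam
  have hkpos : ∀ n : ℤ, 0 < kk k0 lam n := fun n => mul_pos hk0 (zpow_pos hlam0 n)
  set U := Real.sqrt (∑' n : ℤ, ‖u n‖ ^ 2) with hU
  set V := Real.sqrt (∑' n : ℤ, ‖v n‖ ^ 2) with hV
  -- the four pieces
  have b1 := prod_bound (|a| * lam) (by positivity) u v 1 2 hu hv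
  have b2 := prod_bound (|b|) (abs_nonneg b) u v (-1) 1 hu hv
  have b3 := prod_bound (|a| * lam⁻¹) (by positivity) u v (-1) (-2) hu hv
  have b4 := prod_bound (|b| * lam⁻¹) (by positivity) u v (-2) (-1) hu hv
  set p1 : ℤ → ℝ := fun n => |a| * lam * (‖u (n + 1)‖ * ‖v (n + 2)‖) with hp1
  set p2 : ℤ → ℝ := fun n => |b| * (‖u (n + -1)‖ * ‖v (n + 1)‖) with hp2
  set p3 : ℤ → ℝ := fun n => |a| * lam⁻¹ * (‖u (n + -1)‖ * ‖v (n + -2)‖) with hp3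
  set p4 : ℤ → ℝ := fun n => |b| * lam⁻¹ * (‖u (n + -2)‖ * ‖v (n + -1)‖) with hp4
  have hp1n : ∀ n, 0 ≤ p1 n := fun n => by positivity
  have hp2n : ∀ n, 0 ≤ p2 n := fun n => by positivity
  have hp3n : ∀ n, 0 ≤ p3 n := fun n => by positivity
  have hp4n : ∀ n, 0 ≤ p4 n := fun n => by positivity
  have m34 := mink_tsum hp3n hp4n b3.1 b4.1 b3.2 b4.2
  have m234 := mink_tsum hp2n (fun n => add_nonneg (hp3n n) (hp4n n)) b2.1 m34.1 b2.2 m34.2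
  have m1234 := mink_tsum hp1n (fun n => add_nonneg (hp2n n) (add_nonneg (hp3n n) (hp4n n)))
    b1.1 m234.1 b1.2 m234.2
  set G : ℤ → ℝ := fun n => p1 n + (p2 n + (p3 n + p4 n)) with hG
  have hGn : ∀ n, 0 ≤ G n := fun n =>
    add_nonneg (hp1n n) (add_nonneg (hp2n n) (add_nonneg (hp3n n) (hp4n n)))
  set F : ℤ → ℝ := fun n => (kk k0 lam n)⁻¹ * ‖sabraB a b k0 lam u v n‖ with hF
  have hFn : ∀ n, 0 ≤ F n := fun n => mul_nonneg (inv_nonneg.2 (hkpos n).le) (norm_nonneg _)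
  -- pointwise bound
  have hFG : ∀ n, F n ≤ G n := by
    intro n
    by_cases hn : (1:ℤ) ≤ n
    · have hK := hkpos n
      have e1 : kk k0 lam (n + 1) = kk k0 lam n * lam := by
        simp [kk, zpow_add_one₀ (ne_of_gt hlam0), mul_assoc]
      have e2 : kk k0 lam (n - 1) = kk k0 lam n * lam⁻¹ := by
        simp [kk, zpow_sub_one₀ (ne_of_gt hlam0), mul_assoc]
      have hbd : ‖sabraB a b k0 lam u v n‖ ≤
          |a| * (kk k0 lam n * lam) * ‖v (n + 2)‖ * ‖u (n + 1)‖ +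
          |b| * kk k0 lam n * ‖v (n + 1)‖ * ‖u (n - 1)‖ +
          |a| * (kk k0 lam n * lam⁻¹) * ‖u (n - 1)‖ * ‖v (n - 2)‖ +
          |b| * (kk k0 lam n * lam⁻¹) * ‖v (n - 1)‖ * ‖u (n - 2)‖ := by
        rw [sabraB, if_pos hn, norm_mul, norm_neg, Complex.norm_I, one_mul]
        have t1 : ‖(a : ℂ) * (kk k0 lam (n + 1) : ℂ) * v (n + 2) * (starRingEnd ℂ) (u (n + 1))‖
            = |a| * (kk k0 lam n * lam) * ‖v (n + 2)‖ * ‖u (n + 1)‖ := by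
          rw [norm_mul, norm_mul, norm_mul, Complex.norm_real, Complex.norm_real,
            Real.norm_eq_abs, Real.norm_eq_abs, abs_of_pos (hkpos _), RCLike.norm_conj, e1]
        have t2 : ‖(b : ℂ) * (kk k0 lam n : ℂ) * v (n + 1) * (starRingEnd ℂ) (u (n - 1))‖
            = |b| * kk k0 lam n * ‖v (n + 1)‖ * ‖u (n - 1)‖ := by
          rw [norm_mul, norm_mul, norm_mul, Complex.norm_real, Complex.norm_real,
            Real.norm_eq_abs, Real.norm_eq_abs, abs_of_pos (hkpos _), RCLike.norm_conj]
        have t3 : ‖(a : ℂ) * (kk k0 lam (n - 1) : ℂ) * u (n - 1) * v (n - 2)‖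
            = |a| * (kk k0 lam n * lam⁻¹) * ‖u (n - 1)‖ * ‖v (n - 2)‖ := by
          rw [norm_mul, norm_mul, norm_mul, Complex.norm_real, Complex.norm_real,
            Real.norm_eq_abs, Real.norm_eq_abs, abs_of_pos (hkpos _), e2]
        have t4 : ‖(b : ℂ) * (kk k0 lam (n - 1) : ℂ) * v (n - 1) * u (n - 2)‖
            = |b| * (kk k0 lam n * lam⁻¹) * ‖v (n - 1)‖ * ‖u (n - 2)‖ := by
          rw [norm_mul, norm_mul, norm_mul, Complex.norm_real, Complex.norm_real,
            Real.norm_eq_abs, Real.norm_eq_abs, abs_of_pos (hkpos _), e2]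
        refine le_trans (norm_add_le _ _) ?_
        refine le_trans (add_le_add_left (norm_add_le _ _) _) ?_
        refine le_trans (add_le_add_left (add_le_add_left (norm_add_le _ _) _) _) ?_
        rw [t1, t2, t3, t4]
      have hKne : kk k0 lam n ≠ 0 := ne_of_gt hK
      have := mul_le_mul_of_nonneg_left hbd (inv_nonneg.2 hK.le)
      refine le_trans this (le_of_eq ?_)
      show _ = p1 n + (p2 n + (p3 n + p4 n))
      rw [hp1, hp2, hp3, hp4]
      simp only [sub_eq_add_neg] 
      field_simp
      ring
    · have : sabraB a b k0 lam u v n = 0 := by rw [sabraB, if_neg hn]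
      rw [hF]
      simp only [this, norm_zero, mul_zero]
      exact hGn n
  -- summability
  have hFG2 : ∀ n, F n ^ 2 ≤ G n ^ 2 := fun n => pow_le_pow_left₀ (hFn n) (hFG n) 2
  have hFsum : Summable (fun n => F n ^ 2) :=
    Summable.of_nonneg_of_le (fun n => sq_nonneg _) hFG2 m1234.1
  have heq : (fun n : ℤ => ((kk k0 lam n) ^ 2)⁻¹ * ‖sabraB a b k0 lam u v n‖ ^ 2)
      = fun n => F n ^ 2 := by
    funext n; rw [hF]; rw [mul_pow, inv_pow]
  refine ⟨heq ▸ hFsum, ?_⟩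
  have hle : Real.sqrt (∑' n : ℤ, ((kk k0 lam n) ^ 2)⁻¹ * ‖sabraB a b k0 lam u v n‖ ^ 2)
      ≤ Real.sqrt (∑' n, G n ^ 2) := by
    rw [heq]
    exact Real.sqrt_le_sqrt (Summable.tsum_le_tsum hFG2 hFsum m1234.1)
  refine hle.trans (m1234.2.trans (le_of_eq ?_))
  ring
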